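/- Let λ > 0 with λ² > 12, let ξ_max = (λ²/2)·(1 − √(1 − 12/λ²)), and let U_λ(ξ) = (1 − 2/ξ)·(1 + λ²/ξ²). Then U_λ(ξ_max) ≥ 1 if and only if λ² ≥ 16. -/

import Mathlib

/-- The value of the timelike effective potential at its local maximum satisfies
`U_λ(ξ_max) ≥ 1` if and only if `λ² ≥ 16`. -/
theorem potential_max_ge_one_iff
    (lam : ℝ) (hlam : 0 < lam) (hlam2 : 12 < lam ^ 2)
    (ξmax : ℝ) (hξmax : ξmax = lam ^ 2 / 2 * (1 - Real.sqrt (1 - 12 / lam ^ 2)))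
    (U : ℝ → ℝ) (hU : U = fun ξ => (1 - 2 / ξ) * (1 + lam ^ 2 / ξ ^ 2)) :
    1 ≤ U ξmax ↔ 16 ≤ lam ^ 2 := by
  subst hξmax hU
  set L := lam ^ 2 with hL
  have hLpos : 0 < L := by linarith
  have h0 : 0 ≤ 1 - 12 / L := by
    rw [sub_nonneg, div_le_one hLpos]; linarith
  set s := Real.sqrt (1 - 12 / L) with hs
  have hs0 : 0 ≤ s := Real.sqrt_nonneg _
  have hs2 : s ^ 2 = 1 - 12 / L := Real.sq_sqrt h0
  have hs1 : s < 1 := by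
    have h12L : 0 < 12 / L := by positivity
    nlinarith
  have h12 : L * (1 - s ^ 2) = 12 := by
    rw [hs2]; field_simp; ring
  have h1s : (0:ℝ) < 1 + s := by linarith
  have h1ms : (0:ℝ) < 1 - s := by linarith
  have hξ : L / 2 * (1 - s) = 6 / (1 + s) := by
    rw [eq_div_iff (by linarith : (1:ℝ) + s ≠ 0)]
    nlinarith [h12]
  simp only [hξ]
  have hne : (6:ℝ) / (1 + s) ≠ 0 := by positivity
  have hUval : (1 - 2 / (6 / (1 + s))) * (1 + L / (6 / (1 + s)) ^ 2)
      = 1 + (2 * s - 1) * (1 + s) / (9 * (1 - s)) := by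
    have hLe : L = 12 / (1 - s ^ 2) := by
      rw [eq_div_iff (by nlinarith : (1:ℝ) - s ^ 2 ≠ 0)]
      linarith [h12]
    rw [hLe]
    have : (1:ℝ) - s ^ 2 ≠ 0 := by nlinarith
    field_simp
    ring
  rw [hUval]
  constructor
  · intro h
    have hnum : 0 ≤ (2 * s - 1) * (1 + s) / (9 * (1 - s)) := by linarith
    have hden : (0:ℝ) < 9 * (1 - s) := by linarith
    have := (div_nonneg_iff.mp hnum)
    have hs12 : 1 / 2 ≤ s := by
      rcases this with ⟨h1, _⟩ | ⟨_, h2⟩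
      · nlinarith
      · linarith
    -- s ≥ 1/2 ⇒ s^2 ≥ 1/4 ⇒ 12/L ≤ 3/4 ⇒ L ≥ 16
    have : 12 / L ≤ 3 / 4 := by nlinarith
    rw [div_le_div_iff₀ hLpos (by norm_num)] at this
    linarith
  · intro h
    have hs12 : 1 / 2 ≤ s := by
      have h34 : 12 / L ≤ 3 / 4 := by
        rw [div_le_div_iff₀ hLpos (by norm_num)]; linarith
      nlinarith
    have : 0 ≤ (2 * s - 1) * (1 + s) / (9 * (1 - s)) :=
      div_nonneg (by nlinarith) (by linarith)
    linarith
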